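/- Let G be a connected undirected graph on vertices {0,1,...,n-1} (n ≥ 2) whose labeling satisfies: for every v ∈ {0,...,n-2}, the encoded neighbor set enc(N(v) \ {v+1}) ≥ enc(N(v+1) \ {v}), where enc(X) = Σ_{u∈X} 2^(n-u-1). Then every vertex v ≥ 1 has at least one neighbor u with u < v. -/

import Mathlib

open scoped Classical

/-- Encoding of a finite set of naturals below `n`: `enc X = Σ_{x∈X} 2^(n-x-1)`. -/
def enc (n : ℕ) (S : Finset ℕ) : ℕ := ∑ x ∈ S, 2 ^ (n - x - 1)

lemma mem_imcoe {n : ℕ} (s : Finset (Fin n)) (m : ℕ) :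
    m ∈ (s.image (fun u => (u : ℕ))) ↔ ∃ x ∈ s, (x : ℕ) = m := by
  simp only [Finset.pure_def, Finset.bind_def, Finset.sup_singleton_apply, Finset.image_id',
    Finset.mem_image]

lemma sum_range_two_pow (k : ℕ) : ∑ i ∈ Finset.range k, 2 ^ (k - i - 1) = 2 ^ k - 1 := by
  induction k with
  | zero => simp
  | succ k ih =>
    rw [Finset.sum_range_succ]
    have h1 : ∑ i ∈ Finset.range k, 2 ^ (k + 1 - i - 1) =
        ∑ i ∈ Finset.range k, 2 * 2 ^ (k - i - 1) := by
      apply Finset.sum_congr rfl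
      intro i hi
      have : i < k := Finset.mem_range.mp hi
      have he : k + 1 - i - 1 = (k - i - 1) + 1 := by omega
      rw [he, pow_succ]
      ring
    rw [h1, ← Finset.mul_sum, ih]
    have h0 : k + 1 - k - 1 = 0 := by omega
    have h2 : 1 ≤ 2 ^ k := Nat.one_le_two_pow
    rw [h0, pow_zero, pow_succ]
    omega

lemma enc_Ico (v n : ℕ) : enc n (Finset.Ico v n) = 2 ^ (n - v) - 1 := by
  unfold enc
  rcases le_or_gt v n with h | h
  · rw [Finset.sum_Ico_eq_sum_range]
    have := sum_range_two_pow (n - v)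
    rw [← this]
    apply Finset.sum_congr rfl
    intro i hi
    have : i < n - v := Finset.mem_range.mp hi
    congr 1
    omega
  · rw [Finset.Ico_eq_empty (by omega)]
    have h0 : n - v = 0 := by omega
    rw [Finset.sum_empty, h0, pow_zero]
    rfl

lemma cross {n : ℕ} (G : SimpleGraph (Fin n)) (t : ℕ) :
    ∀ {x y : Fin n}, G.Walk x y → (x : ℕ) < t → t ≤ (y : ℕ) →
      ∃ a b : Fin n, (a : ℕ) < t ∧ t ≤ (b : ℕ) ∧ G.Adj a b := by
  intro x y p
  induction p with
  | nil => intro h1 h2; omega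
  | @cons u c w h p ih =>
    intro h1 h2
    rcases le_or_gt t (c : ℕ) with hc | hc
    · exact ⟨u, c, h1, hc, h⟩
    · exact ih hc h2

/-- If a connected graph on `{0,...,n-1}` satisfies the lexicographic symmetry-breaking
constraints `enc(N(v)\{v+1}) ≥ enc(N(v+1)\{v})`, then every vertex `v ≥ 1` has a
neighbor with smaller index. -/
theorem stmt3 (n : ℕ) (hn : 2 ≤ n) (G : SimpleGraph (Fin n)) (hconn : G.Connected)
    (hsym : ∀ v : Fin n, ∀ hv : (v : ℕ) + 1 < n,
      enc n (((G.neighborFinset v).erase ⟨(v : ℕ) + 1, hv⟩).image (fun u => (u : ℕ))) ≥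
      enc n (((G.neighborFinset ⟨(v : ℕ) + 1, hv⟩).erase v).image (fun u => (u : ℕ)))) :
    ∀ v : Fin n, 0 < (v : ℕ) → ∃ u : Fin n, u < v ∧ G.Adj u v := by
  intro v hv
  by_contra hno
  push_neg at hno
  -- a crossing edge exists
  have h0n : (0 : ℕ) < n := by omega
  obtain ⟨p⟩ := hconn.preconnected ⟨0, h0n⟩ v
  obtain ⟨a, b, ha, hb, hadj⟩ := cross G (v : ℕ) p (by simpa using hv) le_rfl
  -- minimal crossing target
  have hP : ∃ m, ∃ a b : Fin n, (a : ℕ) < (v : ℕ) ∧ (b : ℕ) = m ∧ (v : ℕ) ≤ m ∧ G.Adj a b :=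
    ⟨(b : ℕ), a, b, ha, rfl, hb, hadj⟩
  set b0 := Nat.find hP with hb0def
  obtain ⟨a0, B, ha0, hB, hvb0, hadj0⟩ := Nat.find_spec hP
  have hBlt := B.isLt
  have hb0n : b0 < n := by omega
  -- b0 ≠ v
  have hb0ne : b0 ≠ (v : ℕ) := by
    intro h
    have hBv : B = v := Fin.ext (by omega)
    exact hno a0 (Fin.lt_def.mpr ha0) (hBv ▸ hadj0)
  have hvlt : (v : ℕ) < b0 := by omega
  -- the vertex w = b0 - 1
  set w : Fin n := ⟨b0 - 1, by omega⟩ with hwdef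
  have hwval : (w : ℕ) = b0 - 1 := rfl
  have hw : (w : ℕ) + 1 < n := by omega
  have hwB : (⟨(w : ℕ) + 1, hw⟩ : Fin n) = B := by
    apply Fin.ext
    show (w : ℕ) + 1 = (B : ℕ)
    omega
  have hkey := hsym w hw
  rw [hwB] at hkey
  -- lower bound on the right-hand side (neighbors of B)
  have ha0mem : (a0 : ℕ) ∈ ((G.neighborFinset B).erase w).image (fun u => (u : ℕ)) := by
    rw [mem_imcoe]
    refine ⟨a0, Finset.mem_erase_of_ne_of_mem ?_ ?_, rfl⟩
    · intro h
      have : (a0 : ℕ) = b0 - 1 := by rw [h]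
      omega
    · rw [SimpleGraph.mem_neighborFinset]
      exact hadj0.symm
  have hlow : 2 ^ (n - (a0 : ℕ) - 1) ≤
      enc n (((G.neighborFinset B).erase w).image (fun u => (u : ℕ))) := by
    unfold enc
    exact Finset.single_le_sum (f := fun x => 2 ^ (n - x - 1))
      (fun x _ => Nat.zero_le _) ha0mem
  -- upper bound on the left-hand side (neighbors of w)
  have hsub : ((G.neighborFinset w).erase B).image (fun u => (u : ℕ)) ⊆
      Finset.Ico (v : ℕ) n := by
    intro m hm
    obtain ⟨x, hx, hxm⟩ := (mem_imcoe _ _).mp hm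
    have hxadj : G.Adj w x := by
      rw [← SimpleGraph.mem_neighborFinset]
      exact Finset.mem_of_mem_erase hx
    rw [Finset.mem_Ico]
    refine ⟨?_, by omega⟩
    by_contra hlt
    push_neg at hlt
    have hPw : ∃ a b : Fin n, (a : ℕ) < (v : ℕ) ∧ (b : ℕ) = b0 - 1 ∧
        (v : ℕ) ≤ b0 - 1 ∧ G.Adj a b :=
      ⟨x, w, by omega, hwval, by omega, hxadj.symm⟩
    exact Nat.find_min hP (by omega : b0 - 1 < b0) hPw
  have hup : enc n (((G.neighborFinset w).erase B).image (fun u => (u : ℕ))) ≤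
      2 ^ (n - (v : ℕ)) - 1 := by
    rw [← enc_Ico (v : ℕ) n]
    unfold enc
    exact Finset.sum_le_sum_of_subset hsub
  -- contradiction
  have hpow : 2 ^ (n - (v : ℕ)) ≤ 2 ^ (n - (a0 : ℕ) - 1) :=
    Nat.pow_le_pow_right (by omega) (by omega)
  have h1 : 1 ≤ 2 ^ (n - (v : ℕ)) := Nat.one_le_two_pow
  omega
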